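/- Let K₁, …, Kₙ ⊆ ℝ^d be convex bodies such that K := K₁ ∩ … ∩ Kₙ has affine dimension strictly less than d, and let x ∈ K be a point contained in the topological boundary of every Kᵢ. Then there exist nonempty finite collections of closed half-spaces {H⁺(i,j)}_{j ∈ Jᵢ}, for i = 1, …, n, such that for every i and j ∈ Jᵢ one has Kᵢ ⊆ H⁺(i,j) and x lies on the boundary hyperplane of H⁺(i,j), and the intersection of all these half-spaces ⋂_{i=1}^n ⋂_{j ∈ Jᵢ} H⁺(i,j) has affine dimension strictly less than d. -/

import Mathlib

open Set Pointwise

noncomputable section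

/-- The set of real numbers that are integers (the ring ℤ viewed inside ℝ). -/
def ZSet : Set ℝ := Set.range (fun z : ℤ => (z : ℝ))

/-- `T : ℝ^d → ℝ^d` is an affine `A`-unimodular transformation: `T x = M x + b` with
`M` an integer matrix of determinant `±1` and `b ∈ A^d`. -/
def IsUnimodularMap {d : ℕ} (A : Set ℝ) (T : (Fin d → ℝ) → (Fin d → ℝ)) : Prop :=
  ∃ (M : Matrix (Fin d) (Fin d) ℤ) (b : Fin d → ℝ),
    (M.det = 1 ∨ M.det = -1) ∧ (∀ i, b i ∈ A) ∧
    ∀ x, T x = (M.map (fun z : ℤ => (z : ℝ))).mulVec x + b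

/-- `Y` is an `A`-unimodular copy of `X`. -/
def IsUnimodCopy {d : ℕ} (A : Set ℝ) (X Y : Set (Fin d → ℝ)) : Prop :=
  ∃ T, IsUnimodularMap A T ∧ Y = T '' X

/-- `K` contains an `A`-unimodular copy of `X`. -/
def ContainsCopy {d : ℕ} (A : Set ℝ) (X K : Set (Fin d → ℝ)) : Prop :=
  ∃ Y, IsUnimodCopy A X Y ∧ Y ⊆ K

/-- `K` is `A`-`X`-free: its relative interior contains no `A`-unimodular copy of `X`. -/
def IsFree {d : ℕ} (A : Set ℝ) (X K : Set (Fin d → ℝ)) : Prop :=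
  ∀ Y, IsUnimodCopy A X Y → ¬ Y ⊆ intrinsicInterior ℝ K

/-- A convex body: a nonempty compact convex set. -/
def IsConvexBody {d : ℕ} (K : Set (Fin d → ℝ)) : Prop :=
  Convex ℝ K ∧ IsCompact K ∧ K.Nonempty

/-- A polytope: the convex hull of a finite set of points. -/
def IsPolytope {d : ℕ} (K : Set (Fin d → ℝ)) : Prop :=
  ∃ F : Set (Fin d → ℝ), F.Finite ∧ K = convexHull ℝ F

/-- The width of `K` along the integer linear functional `u`. -/
def widthAlong {d : ℕ} (u : Fin d → ℤ) (K : Set (Fin d → ℝ)) : ℝ :=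
  sSup {w | ∃ x ∈ K, ∃ y ∈ K, w = |(∑ i, (u i : ℝ) * x i) - ∑ i, (u i : ℝ) * y i|}

/-- The lattice width of `K`: the infimum of its widths along nonzero integer functionals. -/
def latticeWidth {d : ℕ} (K : Set (Fin d → ℝ)) : ℝ :=
  sInf {w | ∃ u : Fin d → ℤ, u ≠ 0 ∧ w = widthAlong u K}

/-- The generalised flatness constant `Flt_d^A(X)`: the supremum of the lattice widths of all
convex bodies containing no `A`-unimodular copy of `X`. -/
def Flt (d : ℕ) (A : Set ℝ) (X : Set (Fin d → ℝ)) : ℝ :=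
  sSup {w | ∃ K : Set (Fin d → ℝ), IsConvexBody K ∧ ¬ ContainsCopy A X K ∧ w = latticeWidth K}

/-- The affine dimension of a set: the dimension of the direction of its affine span. -/
def affDim {d : ℕ} (s : Set (Fin d → ℝ)) : ℕ :=
  Module.finrank ℝ (affineSpan ℝ s).direction

/-- Minkowski difference `K ÷ S = {x | S + x ⊆ K}`. -/
def mDiff {d : ℕ} (K S : Set (Fin d → ℝ)) : Set (Fin d → ℝ) :=
  {x | ∀ s ∈ S, s + x ∈ K}

/-- The standard triangle `Δ₂ = conv{(0,0), (1,0), (0,1)} ⊆ ℝ²`. -/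
def stdSimplex2 : Set (Fin 2 → ℝ) := convexHull ℝ {![0, 0], ![1, 0], ![0, 1]}
section AuxLemmas

open Filter Topology

/-- Points of a convex set lie in the closure of its interior (given some interior point). -/
lemma mem_closure_interior_of_convex {E : Type*} [NormedAddCommGroup E] [NormedSpace ℝ E]
    {s : Set E} (hs : Convex ℝ s) {z y : E} (hz : z ∈ interior s) (hy : y ∈ s) :
    y ∈ closure (interior s) := by
  have h0 : Tendsto (fun k : ℕ => 1 / ((k : ℝ) + 1)) atTop (nhds 0) :=
    tendsto_one_div_add_atTop_nhds_zero_nat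
  have hc : Tendsto (fun k : ℕ => (1 / ((k : ℝ) + 1)) • z + (1 - 1 / ((k : ℝ) + 1)) • y)
      atTop (nhds y) := by
    have := (h0.smul_const z).add ((tendsto_const_nhds (x := (1:ℝ)).sub h0).smul_const y)
    simpa using this
  refine mem_closure_of_tendsto hc (Filter.Eventually.of_forall fun k => ?_)
  have hk1 : 1 / ((k : ℝ) + 1) ≤ 1 := by
    rw [div_le_one (by positivity)]
    linarith [Nat.cast_nonneg (α := ℝ) k]
  exact hs.combo_interior_self_mem_interior hz hy (by positivity) (by linarith) (by ring)

/-- A convex set with empty interior admits a nonzero linear functional constant on it. -/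
lemma exists_const_support {d : ℕ} {Kc : Set (Fin d → ℝ)} {x : Fin d → ℝ}
    (hconv : Convex ℝ Kc) (hxK : x ∈ Kc) (hne : interior Kc = ∅) :
    ∃ f : (Fin d → ℝ) →ₗ[ℝ] ℝ, f ≠ 0 ∧ ∀ y ∈ Kc, f y = f x := by
  have hspan : affineSpan ℝ Kc ≠ ⊤ := by
    intro htop
    have := hconv.interior_nonempty_iff_affineSpan_eq_top.mpr htop
    rw [hne] at this
    exact Set.not_nonempty_empty this
  have hdir : (affineSpan ℝ Kc).direction < ⊤ := by
    rw [lt_top_iff_ne_top]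
    intro hd
    exact hspan ((AffineSubspace.direction_eq_top_iff_of_nonempty
      ⟨x, subset_affineSpan ℝ Kc hxK⟩).mp hd)
  obtain ⟨f, hf0, hfbot⟩ := Submodule.exists_dual_map_eq_bot_of_lt_top hdir inferInstance
  refine ⟨f, hf0, fun y hy => ?_⟩
  have hmem : y - x ∈ (affineSpan ℝ Kc).direction :=
    AffineSubspace.vsub_mem_direction (subset_affineSpan ℝ Kc hy) (subset_affineSpan ℝ Kc hxK)
  have h1 : f (y - x) ∈ Submodule.map f (affineSpan ℝ Kc).direction :=
    Submodule.mem_map_of_mem hmem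
  rw [hfbot, Submodule.mem_bot] at h1
  have := map_sub f y x
  rw [h1] at this
  linarith [this.symm]

/-- Existence of a nonzero supporting functional at a boundary point of a convex set. -/
lemma exists_support {d : ℕ} {Kc : Set (Fin d → ℝ)} {x : Fin d → ℝ}
    (hconv : Convex ℝ Kc) (hxK : x ∈ Kc) (hfr : x ∉ interior Kc) :
    ∃ f : (Fin d → ℝ) →ₗ[ℝ] ℝ, f ≠ 0 ∧ ∀ y ∈ Kc, f x ≤ f y := by
  by_cases hne : (interior Kc).Nonempty
  · obtain ⟨f, hf⟩ := geometric_hahn_banach_open_point hconv.interior isOpen_interior hfr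
    obtain ⟨z, hz⟩ := hne
    have hfy : ∀ y ∈ Kc, f y ≤ f x := by
      intro y hy
      have h1 : y ∈ closure (interior Kc) := mem_closure_interior_of_convex hconv hz hy
      have h2 : closure (interior Kc) ⊆ {w | f w ≤ f x} :=
        closure_minimal (fun a ha => (hf a ha).le) (isClosed_le f.continuous continuous_const)
      exact h2 h1
    refine ⟨-f.toLinearMap, ?_, fun y hy => ?_⟩
    · intro h0
      have hz0 : f z < f x := hf z hz
      have hzero : ∀ w, f w = 0 := fun w => by
        have := LinearMap.congr_fun h0 w
        simpa [neg_eq_zero] using this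
      rw [hzero z, hzero x] at hz0
      exact lt_irrefl _ hz0
    · simpa using hfy y hy
  · rw [Set.not_nonempty_iff_eq_empty] at hne
    obtain ⟨f, hf0, hfc⟩ := exists_const_support hconv hxK hne
    exact ⟨f, hf0, fun y hy => (hfc y hy).ge⟩

/-- Subsets of an affine hyperplane have affine dimension `< d`. -/
lemma affDim_lt_of_exists_hyperplane {d : ℕ} {P : Set (Fin d → ℝ)}
    {f : (Fin d → ℝ) →ₗ[ℝ] ℝ} (hf : f ≠ 0) {c : ℝ} (hP : ∀ y ∈ P, f y = c) :
    affDim P < d := by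
  have hker : (affineSpan ℝ P).direction ≤ LinearMap.ker f := by
    rw [direction_affineSpan, vectorSpan_def]
    refine Submodule.span_le.mpr ?_
    rintro v ⟨a, ha, b, hb, rfl⟩
    simp [LinearMap.mem_ker, vsub_eq_sub, map_sub, hP a ha, hP b hb]
  have h1 : LinearMap.ker f < ⊤ :=
    lt_top_iff_ne_top.mpr fun h => hf (LinearMap.ker_eq_top.mp h)
  have h2 : Module.finrank ℝ (LinearMap.ker f) < d := by
    have := Submodule.finrank_lt (K := ℝ) (V := Fin d → ℝ) h1.ne
    rwa [Module.finrank_fin_fun] at this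
  exact lt_of_le_of_lt (Submodule.finrank_mono hker) h2

/-- If the intersection has affine dimension `< d`, no point is interior to all the `K i`. -/
lemma no_common_interior_point {d n : ℕ} (K : Fin n → Set (Fin d → ℝ))
    (hdim : affDim (⋂ i, K i) < d) (y : Fin d → ℝ) (hy : ∀ i, y ∈ interior (K i)) : False := by
  have hopen : IsOpen (⋂ i, interior (K i)) := isOpen_iInter_of_finite fun i => isOpen_interior
  have hsub : (⋂ i, interior (K i)) ⊆ ⋂ i, K i := Set.iInter_mono fun i => interior_subset
  have htop : affineSpan ℝ (⋂ i, K i) = ⊤ := by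
    refine top_unique ?_
    rw [← hopen.affineSpan_eq_top ⟨y, Set.mem_iInter.mpr hy⟩]
    exact affineSpan_mono ℝ hsub
  rw [affDim, htop, AffineSubspace.direction_top] at hdim
  rw [finrank_top, Module.finrank_fin_fun] at hdim
  exact lt_irrefl _ hdim

end AuxLemmas

/-- If the intersection of convex bodies `K₁, …, Kₙ` has affine dimension `< d` and `x` lies
in the intersection and on the boundary of every `Kᵢ`, then there are nonempty finite
collections of closed half-spaces, each supporting the respective `Kᵢ` at `x`, whose common
intersection has affine dimension `< d`. -/
theorem exists_supporting_halfspaces_dim_lt (d n : ℕ) (hn : 0 < n)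
    (K : Fin n → Set (Fin d → ℝ)) (hK : ∀ i, IsConvexBody (K i))
    (hdim : affDim (⋂ i, K i) < d)
    (x : Fin d → ℝ) (hx : x ∈ ⋂ i, K i) (hbd : ∀ i, x ∈ frontier (K i)) :
    ∃ (m : Fin n → ℕ) (ℓ : ∀ i, Fin (m i) → (Fin d → ℝ) →ₗ[ℝ] ℝ) (c : ∀ i, Fin (m i) → ℝ),
      (∀ i, 0 < m i) ∧
      (∀ i j, ℓ i j ≠ 0) ∧
      (∀ i j, K i ⊆ {y | c i j ≤ ℓ i j y}) ∧
      (∀ i j, ℓ i j x = c i j) ∧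
      affDim (⋂ i, ⋂ j : Fin (m i), {y | c i j ≤ ℓ i j y}) < d := by
  classical
  have hxK : ∀ i, x ∈ K i := fun i => Set.mem_iInter.mp hx i
  have hfrx : ∀ i, x ∉ interior (K i) := fun i => (hbd i).2
  have hsupp : ∀ i, ∃ f : (Fin d → ℝ) →ₗ[ℝ] ℝ, f ≠ 0 ∧ ∀ y ∈ K i, f x ≤ f y := fun i =>
    exists_support (hK i).1 (hxK i) (hfrx i)
  choose h hne0 hhsupp using hsupp
  have key : ∃ (p q : Fin n → (Fin d → ℝ) →ₗ[ℝ] ℝ) (i₀ : Fin n),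
      (∀ i, p i ≠ 0) ∧ (∀ i, q i ≠ 0) ∧
      (∀ i, ∀ y ∈ K i, p i x ≤ p i y) ∧ (∀ i, ∀ y ∈ K i, q i x ≤ q i y) ∧
      (∀ y, (∀ i, p i x ≤ p i y) → (∀ i, q i x ≤ q i y) → p i₀ y = p i₀ x) := by
    by_cases hint : ∀ i, (interior (K i)).Nonempty
    · -- all interiors nonempty: separate the product from the diagonal
      choose z hz using hint
      set s : Set (Fin n → Fin d → ℝ) := Set.univ.pi (fun i => interior (K i)) with hs
      have hsopen : IsOpen s := isOpen_set_pi Set.finite_univ (fun i _ => isOpen_interior)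
      have hsconv : Convex ℝ s := convex_pi (fun i _ => (hK i).1.interior)
      have htconv : Convex ℝ (Set.range (fun y : Fin d → ℝ => (fun _ : Fin n => y))) := by
        rintro _ ⟨a, rfl⟩ _ ⟨b, rfl⟩ ta tb hta htb htab
        exact ⟨ta • a + tb • b, by funext j; simp⟩
      have hdisj : Disjoint s (Set.range (fun y : Fin d → ℝ => (fun _ : Fin n => y))) := by
        rw [Set.disjoint_left]
        rintro v hv ⟨y, rfl⟩
        exact no_common_interior_point K hdim y (fun i => hv i (Set.mem_univ i))
      obtain ⟨F, u, hFs, hFt⟩ := geometric_hahn_banach_open hsconv hsopen htconv hdisj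
      set g : Fin n → (Fin d → ℝ) →ₗ[ℝ] ℝ :=
        fun i => F.toLinearMap.comp (LinearMap.single ℝ (fun _ : Fin n => Fin d → ℝ) i) with hg
      have hFsum : ∀ b : Fin n → Fin d → ℝ, F b = ∑ i, g i (b i) := by
        intro b
        conv_lhs => rw [← Finset.univ_sum_single b]
        rw [map_sum]
        rfl
      have hline : ∀ w : Fin d → ℝ, u ≤ ∑ i, g i w := fun w => by
        have := hFt _ ⟨w, rfl⟩
        rwa [hFsum] at this
      have hsum0 : ∀ y : Fin d → ℝ, ∑ i, g i y = 0 := by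
        intro y
        by_contra hy0
        have h2 := hline (((u - 1) / ∑ i, g i y) • y)
        have h3 : ∑ i, g i (((u - 1) / ∑ i, g i y) • y)
            = ((u - 1) / ∑ i, g i y) * ∑ i, g i y := by
          simp [map_smul, smul_eq_mul, Finset.mul_sum]
        rw [h3, div_mul_cancel₀ _ hy0] at h2
        linarith
      have hu0 : u ≤ 0 := by
        have h1 := hline 0
        simpa using h1
      have hFle : ∀ b : Fin n → Fin d → ℝ, (∀ i, b i ∈ K i) → F b ≤ u := by
        intro b hb
        have hbc : b ∈ closure s := by
          rw [hs, closure_pi_set]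
          intro i _
          exact mem_closure_interior_of_convex (hK i).1 (hz i) (hb i)
        exact closure_minimal (fun a ha => (hFs a ha).le)
          (isClosed_le F.continuous continuous_const) hbc
      have hgsupp : ∀ i, ∀ y ∈ K i, g i y ≤ g i x := by
        intro i y hy
        have hb : ∀ j, (Function.update (fun _ => x) i y) j ∈ K j := by
          intro j
          by_cases hj : j = i
          · subst hj; simpa using hy
          · simpa [Function.update_of_ne hj] using hxK j
        have h1 := hFle _ hb
        rw [hFsum] at h1
        have h2 : (fun j => g j (Function.update (fun _ => x) i y j))
            = Function.update (fun j => g j x) i (g i y) := by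
          funext j
          by_cases hj : j = i
          · subst hj; simp
          · simp [Function.update_of_ne hj]
        rw [h2, Finset.sum_update_of_mem (Finset.mem_univ i)] at h1
        have h3 : ∑ j, g j x = g i x + ∑ j ∈ Finset.univ \ {i}, g j x :=
          Finset.sum_eq_add_sum_sdiff_singleton_of_mem (Finset.mem_univ i) _
        have h4 := hsum0 x
        rw [h3] at h4
        linarith
      have hex : ∃ i, g i ≠ 0 := by
        by_contra h0
        push_neg at h0
        have h1 := hFs z (fun i _ => hz i)
        rw [hFsum] at h1
        simp only [h0, LinearMap.zero_apply, Finset.sum_const_zero] at h1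
        linarith
      obtain ⟨i₁, hi₁⟩ := hex
      refine ⟨fun i => if hgi : g i = 0 then h i else -(g i),
              fun i => if hgi : g i = 0 then h i else -(g i), i₁, ?_, ?_, ?_, ?_, ?_⟩
      · intro i
        by_cases hgi : g i = 0
        · simpa [hgi] using hne0 i
        · simpa [hgi] using neg_ne_zero.mpr hgi
      · intro i
        by_cases hgi : g i = 0
        · simpa [hgi] using hne0 i
        · simpa [hgi] using neg_ne_zero.mpr hgi
      · intro i y hy
        by_cases hgi : g i = 0
        · simpa [hgi] using hhsupp i y hy
        · simp only [dif_neg hgi, LinearMap.neg_apply, neg_le_neg_iff]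
          exact hgsupp i y hy
      · intro i y hy
        by_cases hgi : g i = 0
        · simpa [hgi] using hhsupp i y hy
        · simp only [dif_neg hgi, LinearMap.neg_apply, neg_le_neg_iff]
          exact hgsupp i y hy
      · intro y hp _
        have hle : ∀ i, 0 ≤ g i x - g i y := by
          intro i
          by_cases hgi : g i = 0
          · simp [hgi]
          · have := hp i
            simp only [dif_neg hgi, LinearMap.neg_apply, neg_le_neg_iff] at this
            linarith
        have hsum : ∑ i, (g i x - g i y) = 0 := by
          rw [Finset.sum_sub_distrib, hsum0, hsum0, sub_zero]
        have hz0 : ∀ i ∈ Finset.univ, g i x - g i y = 0 :=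
          (Finset.sum_eq_zero_iff_of_nonneg (fun i _ => hle i)).mp hsum
        have := hz0 i₁ (Finset.mem_univ i₁)
        simp only [dif_neg hi₁, LinearMap.neg_apply]
        linarith
    · -- some interior is empty
      push_neg at hint
      obtain ⟨i₀, hi₀⟩ := hint
      obtain ⟨f, hf0, hfc⟩ := exists_const_support (hK i₀).1 (hxK i₀) hi₀
      refine ⟨fun i => if i = i₀ then f else h i,
              fun i => if i = i₀ then -f else h i, i₀, ?_, ?_, ?_, ?_, ?_⟩
      · intro i
        by_cases hi : i = i₀
        · simpa [hi] using hf0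
        · simpa [hi] using hne0 i
      · intro i
        by_cases hi : i = i₀
        · simpa [hi] using neg_ne_zero.mpr hf0
        · simpa [hi] using hne0 i
      · intro i y hy
        by_cases hi : i = i₀
        · subst hi; simp [(hfc y hy).ge]
        · simpa [hi] using hhsupp i y hy
      · intro i y hy
        by_cases hi : i = i₀
        · subst hi; simp [(hfc y hy).le]
        · simpa [hi] using hhsupp i y hy
      · intro y hp hq
        have h1 := hp i₀
        have h2 := hq i₀
        simp at h1 h2 ⊢
        linarith
  obtain ⟨p, q, i₀, hp0, hq0, hps, hqs, hker⟩ := key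
  refine ⟨fun _ => 2, fun i => ![p i, q i], fun i => ![p i x, q i x],
    fun i => two_pos, ?_, ?_, ?_, ?_⟩
  · intro i j
    fin_cases j
    · simpa using hp0 i
    · simpa using hq0 i
  · intro i j y hy
    fin_cases j
    · simpa using hps i y hy
    · simpa using hqs i y hy
  · intro i j
    fin_cases j <;> simp
  · refine affDim_lt_of_exists_hyperplane (hp0 i₀) (c := p i₀ x) ?_
    intro y hy
    simp only [Set.mem_iInter, Set.mem_setOf_eq] at hy
    refine hker y (fun i => ?_) (fun i => ?_)
    · simpa using hy i 0
    · simpa using hy i 1
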